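/- Let A be a commutative ring containing ℚ, let E be a finite free module over the formal power series ring A[[t]], and let ∇ : E → E be an additive map satisfying ∇(f·e) = f·∇(e) + f′·e for all f ∈ A[[t]] and e ∈ E, where f′ is the formal derivative. Then: (i) the natural A[[t]]-linear map A[[t]] ⊗_A ker(∇) → E is bijective; and (ii) the composite of the inclusion ker(∇) ⊆ E with the quotient map E → E/tE is an isomorphism of A-modules. -/

import Mathlib

open PowerSeries Finset

section aux
variable {A : Type*} [CommRing A] [Algebra ℚ A] {ι : Type*} [Fintype ι]

noncomputable def sol (Γ : ι → ι → PowerSeries A) (a : ι → A) : ℕ → ι → A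
  | 0 => a
  | (n+1) => fun j => -(((n : ℚ) + 1)⁻¹ •
      ∑ i, ∑ k ∈ (Finset.range (n+1)).attach,
        sol Γ a k.1 i * (PowerSeries.coeff (R := A) (n - k.1) (Γ j i)))
  termination_by n => n
  decreasing_by exact Finset.mem_range.mp k.2

lemma natCast_succ_eq (n : ℕ) : ((n : A) + 1) = algebraMap ℚ A ((n : ℚ) + 1) := by
  push_cast; simp

lemma succ_mul_cancel {x : A} (n : ℕ) (h : x * ((n : A) + 1) = 0) : x = 0 := by
  have hne : ((n : ℚ) + 1) ≠ 0 := by positivity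
  have h1 : ((n : A) + 1) * algebraMap ℚ A ((n : ℚ) + 1)⁻¹ = 1 := by
    rw [natCast_succ_eq, ← map_mul, mul_inv_cancel₀ hne, map_one]
  calc x = x * (((n : A) + 1) * algebraMap ℚ A ((n : ℚ) + 1)⁻¹) := by rw [h1, mul_one]
    _ = (x * ((n : A) + 1)) * algebraMap ℚ A ((n : ℚ) + 1)⁻¹ := by ring
    _ = 0 := by rw [h, zero_mul]

lemma deriv_eq_zero_iff (f : PowerSeries A) :
    PowerSeries.derivative A f = 0 ↔ f = PowerSeries.C (R := A) (PowerSeries.constantCoeff (R := A) f) := by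
  constructor
  · intro h
    ext n
    cases n with
    | zero => simp [PowerSeries.coeff_zero_eq_constantCoeff]
    | succ n =>
      have h2 := congrArg (PowerSeries.coeff (R := A) n) h
      rw [PowerSeries.coeff_derivative, map_zero] at h2
      rw [PowerSeries.coeff_succ_C]
      exact succ_mul_cancel n (by push_cast at h2 ⊢; exact h2)
  · intro h
    rw [h]
    simp

lemma sol_succ_mul (Γ : ι → ι → PowerSeries A) (a : ι → A) (n : ℕ) (j : ι) :
    ((n : A) + 1) * sol Γ a (n+1) j
      = -∑ i, ∑ k ∈ Finset.range (n+1), sol Γ a k i * (PowerSeries.coeff (R := A) (n - k) (Γ j i)) := by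
  have hne : ((n : ℚ) + 1) ≠ 0 := by positivity
  rw [sol, natCast_succ_eq, mul_neg, ← Algebra.smul_def, smul_smul, mul_inv_cancel₀ hne, one_smul]
  congr 1
  exact Finset.sum_congr rfl fun i _ =>
    Finset.sum_attach (Finset.range (n+1)) (fun k => sol Γ a k i * (PowerSeries.coeff (R := A) (n - k)) (Γ j i))

noncomputable def soln (Γ : ι → ι → PowerSeries A) (a : ι → A) (j : ι) : PowerSeries A :=
  PowerSeries.mk fun n => sol Γ a n j

@[simp] lemma soln_constantCoeff (Γ : ι → ι → PowerSeries A) (a : ι → A) (j : ι) :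
    PowerSeries.constantCoeff (R := A) (soln Γ a j) = a j := by
  simp [soln, ← PowerSeries.coeff_zero_eq_constantCoeff, sol]

lemma soln_spec (Γ : ι → ι → PowerSeries A) (a : ι → A) (j : ι) :
    PowerSeries.derivative A (soln Γ a j) + ∑ i, soln Γ a i * Γ j i = 0 := by
  ext n
  rw [map_add, PowerSeries.coeff_derivative]
  have h1 : (PowerSeries.coeff (R := A) n) (∑ i, soln Γ a i * Γ j i)
      = ∑ i, ∑ k ∈ Finset.range (n+1), sol Γ a k i * (PowerSeries.coeff (R := A) (n - k) (Γ j i)) := by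
    rw [map_sum]
    refine Finset.sum_congr rfl fun i _ => ?_
    rw [PowerSeries.coeff_mul, Finset.Nat.sum_antidiagonal_eq_sum_range_succ_mk]
    simp [soln]
  rw [h1, soln, PowerSeries.coeff_mk, map_zero, mul_comm (sol Γ a (n+1) j),
    sol_succ_mul Γ a n j, neg_add_cancel]

end aux



set_option synthInstance.maxHeartbeats 1000000 in
set_option maxHeartbeats 1000000 in
/-- Let `A` be a commutative ring containing `ℚ`, `E` a finite free module
over `A⟦t⟧`, and `D : E → E` an additive map satisfying the Leibniz rule
`D (f • e) = f • D e + f' • e`. Then the kernel of `D` is an `A`-submodule `V` of `E` such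
that (i) the natural `A⟦t⟧`-linear map `A⟦t⟧ ⊗[A] V → E` is bijective, and (ii) the composite
of the inclusion `V ⊆ E` with the quotient map `E → E/tE` is an isomorphism of `A`-modules. -/
theorem stmt7 (A : Type*) [CommRing A] [Algebra ℚ A]
    (E : Type*) [AddCommGroup E] [Module (PowerSeries A) E]
    [Module A E] [IsScalarTower A (PowerSeries A) E]
    [Module.Finite (PowerSeries A) E] [Module.Free (PowerSeries A) E]
    (D : E →+ E)
    (hD : ∀ (f : PowerSeries A) (e : E),
      D (f • e) = f • D e + (PowerSeries.derivative A f) • e) :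
    ∃ V : Submodule A E,
      (V : Set E) = {e : E | D e = 0} ∧
      Function.Bijective (LinearMap.liftBaseChange (PowerSeries A) V.subtype) ∧
      Function.Bijective
        (((LinearMap.range ((PowerSeries.X : PowerSeries A) •
            (LinearMap.id : E →ₗ[PowerSeries A] E))).restrictScalars A).mkQ.comp
          V.subtype) := by
  classical
  set ι := Module.Free.ChooseBasisIndex (PowerSeries A) E with hι
  set b : Module.Basis ι (PowerSeries A) E := Module.Free.chooseBasis (PowerSeries A) E with hb
  -- general formula for the coordinates of D e in any basis
  have repr_D : ∀ (β : Module.Basis ι (PowerSeries A) E) (e : E) (j : ι),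
      β.repr (D e) j = PowerSeries.derivative A (β.repr e j)
        + ∑ i, β.repr e i * β.repr (D (β i)) j := by
    intro β e j
    have h1 : D e = ∑ i, (β.repr e i • D (β i)
        + (PowerSeries.derivative A (β.repr e i)) • β i) := by
      conv_lhs => rw [← β.sum_repr e, map_sum]
      exact Finset.sum_congr rfl fun i _ => hD _ _
    rw [h1, map_sum, Finsupp.finset_sum_apply]
    simp only [map_add, Finsupp.add_apply, map_smul, Finsupp.smul_apply, Module.Basis.repr_self,
      Finsupp.single_apply, smul_eq_mul]
    rw [Finset.sum_add_distrib]
    rw [Finset.sum_congr rfl (fun i _ => by rw [mul_ite, mul_one, mul_zero] :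
      ∀ i ∈ Finset.univ, PowerSeries.derivative A (β.repr e i) * (if i = j then 1 else 0)
        = if i = j then PowerSeries.derivative A (β.repr e i) else 0)]
    rw [Finset.sum_ite_eq' Finset.univ j (fun i => PowerSeries.derivative A (β.repr e i))]
    simp [add_comm]
  set Γ : ι → ι → PowerSeries A := fun j i => b.repr (D (b i)) j with hΓ
  set M : Matrix ι ι (PowerSeries A) := Matrix.of fun j i => soln Γ (Pi.single i 1) j with hM
  have hMdet : IsUnit M.det := by
    rw [PowerSeries.isUnit_iff_constantCoeff]
    rw [show (PowerSeries.constantCoeff (R := A)) M.det = (M.map (PowerSeries.constantCoeff (R := A))).det from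
      (RingHom.map_det _ _)]
    rw [show M.map (PowerSeries.constantCoeff (R := A)) = 1 by
      ext j i
      simp [hM, Matrix.map_apply, Matrix.one_apply, Pi.single_apply]]
    simp
  set c : Module.Basis ι (PowerSeries A) E := b.map (Matrix.toLinearEquiv b M hMdet) with hcdef
  have hc : ∀ i, c i = ∑ j, M j i • b j := by
    intro i
    rw [hcdef, Module.Basis.map_apply, Matrix.toLinearEquiv_apply, Matrix.toLin_self]
  have hrepr_c : ∀ i j, b.repr (c i) j = M j i := by
    intro i j
    rw [hc, map_sum]
    simp [Module.Basis.repr_self, Finsupp.single_apply]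
  have hDc : ∀ i, D (c i) = 0 := by
    intro i
    apply b.repr.map_eq_zero_iff.mp
    refine Finsupp.ext fun j => ?_
    rw [repr_D b, Finsupp.coe_zero, Pi.zero_apply]
    simp only [hrepr_c]
    exact soln_spec Γ (Pi.single i 1) j
  have repr_Dc : ∀ (e : E) (j : ι), c.repr (D e) j = PowerSeries.derivative A (c.repr e j) := by
    intro e j
    rw [repr_D c e j]
    simp [hDc]
  have hDiff : ∀ e : E, D e = 0 ↔ ∀ j, PowerSeries.derivative A (c.repr e j) = 0 := by
    intro e
    constructor
    · intro h j; rw [← repr_Dc e j, h, map_zero]; rfl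
    · intro h
      exact c.repr.map_eq_zero_iff.mp (Finsupp.ext fun j => by
        rw [repr_Dc e j]; exact h j)
  -- the submodule V
  set V : Submodule A E :=
    { carrier := {e : E | D e = 0}
      add_mem' := fun {x y} hx hy => by
        simp only [Set.mem_setOf_eq] at *
        rw [map_add, hx, hy, add_zero]
      zero_mem' := by simp [map_zero]
      smul_mem' := fun a e he => by
        simp only [Set.mem_setOf_eq] at *
        rw [← algebraMap_smul (PowerSeries A) a e, hD, he, smul_zero, zero_add,
          PowerSeries.algebraMap_apply, Algebra.algebraMap_self, RingHom.id_apply]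
        simp } with hV
  have hVmem : ∀ e : E, e ∈ V ↔ D e = 0 := fun e => Iff.rfl
  set T : Submodule (PowerSeries A) E := LinearMap.range ((PowerSeries.X : PowerSeries A) •
      (LinearMap.id : E →ₗ[PowerSeries A] E)) with hTdef
  have hT : ∀ e : E, e ∈ T ↔ ∀ j, PowerSeries.constantCoeff (R := A) (c.repr e j) = 0 := by
    intro e
    constructor
    · rintro ⟨u, rfl⟩ j
      rw [LinearMap.smul_apply, LinearMap.id_apply, map_smul, Finsupp.smul_apply, smul_eq_mul,
        map_mul, PowerSeries.constantCoeff_X, zero_mul]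
    · intro h
      have hdvd : ∀ j, ∃ g, c.repr e j = PowerSeries.X * g :=
        fun j => PowerSeries.X_dvd_iff.mpr (h j)
      choose g hg using hdvd
      refine ⟨c.repr.symm (Finsupp.equivFunOnFinite.symm g), ?_⟩
      apply c.repr.injective
      ext j
      rw [LinearMap.smul_apply, LinearMap.id_apply, map_smul, Finsupp.smul_apply, smul_eq_mul,
        LinearEquiv.apply_symm_apply]
      simp [hg j]
  -- the A-linear "constant coefficients" map
  set φ : V →ₗ[A] (ι → A) :=
    { toFun := fun v j => PowerSeries.constantCoeff (R := A) (c.repr (v : E) j)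
      map_add' := by
        intro v w
        ext j
        simp
      map_smul' := by
        intro a v
        have h : ((a • v : V) : E) = (PowerSeries.C (R := A) a) • (v : E) := by
          rw [show ((a • v : V) : E) = a • (v : E) from rfl,
            ← algebraMap_smul (PowerSeries A) a ((v : V) : E), PowerSeries.algebraMap_apply,
            Algebra.algebraMap_self, RingHom.id_apply]
        ext j
        simp only [h, map_smul, Finsupp.smul_apply, smul_eq_mul, map_mul,
          PowerSeries.constantCoeff_C, RingHom.id_apply, Pi.smul_apply] } with hφ
  have hmemV_coords : ∀ v : V, ∀ j, c.repr (v : E) j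
      = PowerSeries.C (R := A) (PowerSeries.constantCoeff (R := A) (c.repr (v : E) j)) := by
    intro v j
    exact (deriv_eq_zero_iff _).mp (((hDiff (v : E)).mp v.2) j)
  have hφinj : Function.Injective φ := by
    rw [injective_iff_map_eq_zero]
    intro v hv
    have h0 : ∀ j, c.repr (v : E) j = 0 := by
      intro j
      rw [hmemV_coords v j, show PowerSeries.constantCoeff (R := A) (c.repr (v : E) j) = 0 from
        congrFun hv j, map_zero]
    ext
    exact c.repr.map_eq_zero_iff.mp (Finsupp.ext h0)
  have hmk : ∀ a : ι → A, D (c.repr.symm (Finsupp.equivFunOnFinite.symm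
      (fun j => PowerSeries.C (R := A) (a j)))) = 0 := by
    intro a
    rw [hDiff]
    intro j
    rw [LinearEquiv.apply_symm_apply]
    simp
  have hφsurj : Function.Surjective φ := by
    intro a
    refine ⟨⟨c.repr.symm (Finsupp.equivFunOnFinite.symm (fun j => PowerSeries.C (R := A) (a j))),
      hmk a⟩, ?_⟩
    ext j
    show PowerSeries.constantCoeff (R := A) (c.repr (c.repr.symm _) j) = a j
    rw [LinearEquiv.apply_symm_apply]
    simp
  set ψ : V ≃ₗ[A] (ι → A) := LinearEquiv.ofBijective φ ⟨hφinj, hφsurj⟩ with hψ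
  set bV : Module.Basis ι A V := (Pi.basisFun A ι).map ψ.symm with hbVdef
  have hbV : ∀ i, ((bV i : V) : E) = c i := by
    intro i
    have h1 : φ ⟨c i, (hVmem (c i)).mpr (hDc i)⟩ = Pi.single i 1 := by
      ext j
      have hrfl : φ ⟨c i, (hVmem (c i)).mpr (hDc i)⟩ j
          = PowerSeries.constantCoeff (R := A) (c.repr (c i) j) := rfl
      rw [hrfl, Module.Basis.repr_self]
      rcases eq_or_ne i j with h | h
      · subst h; simp
      · simp [Finsupp.single_apply, Pi.single_apply, h, Ne.symm h]
    have h2 : bV i = ⟨c i, (hVmem (c i)).mpr (hDc i)⟩ := by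
      apply hφinj
      rw [show φ (bV i) = ψ (bV i) from rfl, hbVdef, Module.Basis.map_apply,
        LinearEquiv.apply_symm_apply, Pi.basisFun_apply, h1]
    rw [h2]
  refine ⟨V, rfl, ?_, ?_⟩
  · -- bijectivity of liftBaseChange
    have hL : LinearMap.liftBaseChange (PowerSeries A) V.subtype
        = ((bV.baseChange (PowerSeries A)).equiv c (Equiv.refl ι)).toLinearMap := by
      apply (bV.baseChange (PowerSeries A)).ext
      intro i
      simp only [LinearEquiv.coe_coe, Module.Basis.baseChange_apply, LinearMap.liftBaseChange_tmul,
        one_smul, Submodule.coe_subtype, Module.Basis.equiv_apply, Equiv.refl_apply]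
      rw [← Module.Basis.baseChange_apply, Module.Basis.equiv_apply, Equiv.refl_apply, hbV]
    rw [hL]
    exact (((bV.baseChange (PowerSeries A)).equiv c (Equiv.refl ι))).bijective
  · -- bijectivity of the map to E/tE
    constructor
    · rw [injective_iff_map_eq_zero]
      intro v hv
      have hvT : (v : E) ∈ T := by
        rw [LinearMap.comp_apply, Submodule.mkQ_apply, Submodule.Quotient.mk_eq_zero,
          Submodule.restrictScalars_mem] at hv
        exact hv
      have h0 : ∀ j, c.repr (v : E) j = 0 := by
        intro j
        rw [hmemV_coords v j, (hT _).mp hvT j, map_zero]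
      ext
      exact c.repr.map_eq_zero_iff.mp (Finsupp.ext h0)
    · intro q
      obtain ⟨e, rfl⟩ := Submodule.mkQ_surjective _ q
      set v : E := c.repr.symm (Finsupp.equivFunOnFinite.symm
        (fun j => PowerSeries.C (R := A) (PowerSeries.constantCoeff (R := A) (c.repr e j)))) with hv
      refine ⟨⟨v, hmk _⟩, ?_⟩
      rw [LinearMap.comp_apply, Submodule.coe_subtype, Submodule.mkQ_apply,
        Submodule.mkQ_apply, Submodule.Quotient.eq, Submodule.restrictScalars_mem]
      refine (hT _).mpr fun j => ?_
      have h2 : c.repr v j = PowerSeries.C (R := A) (PowerSeries.constantCoeff (R := A) (c.repr e j)) := by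
        rw [hv, LinearEquiv.apply_symm_apply]
        simp
      show (PowerSeries.constantCoeff (R := A)) ((c.repr (v - e)) j) = 0
      rw [map_sub, Finsupp.sub_apply, map_sub, h2, PowerSeries.constantCoeff_C, sub_self]
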